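/- Let f : ℝ → ℝ be a reduced function that is analytic on an open neighborhood of 0 and satisfies, for all x, y in a sufficiently small neighborhood of 0, the logarithmic functional equation f((x/(1−x))·(y/(1−y))) + f(x) + f(y) = f(x+y). Then there exists a real number a such that f(x) = −a·log(1 − x) for all x in some neighborhood of 0. -/

import Mathlib

/-- Every reduced function, analytic on an open neighborhood of `0`,
satisfying the logarithmic functional equation
`f ((x/(1-x)) * (y/(1-y))) + f x + f y = f (x + y)`
for all `x, y` in a sufficiently small neighborhood of `0`,
is of the form `x ↦ -a * log (1 - x)` near `0`. -/
theorem logarithmic_functional_equation (f : ℝ → ℝ) (h0 : f 0 = 0)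
    (hf : ∃ U ∈ nhds (0 : ℝ), IsOpen U ∧ ∀ x ∈ U, AnalyticAt ℝ f x)
    (heq : ∃ V ∈ nhds (0 : ℝ), ∀ x ∈ V, ∀ y ∈ V,
      f ((x / (1 - x)) * (y / (1 - y))) + f x + f y = f (x + y)) :
    ∃ a : ℝ, ∀ᶠ x in nhds (0 : ℝ), f x = -a * Real.log (1 - x) := by
  obtain ⟨U, hU, hUo, hUa⟩ := hf
  obtain ⟨V, hV, hVeq⟩ := heq
  have hUV : U ∩ V ∈ nhds (0 : ℝ) := Filter.inter_mem hU hV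
  obtain ⟨ε, hε, hball⟩ := Metric.mem_nhds_iff.mp hUV
  set δ : ℝ := min ε (1/2) with hδdef
  have hδ : 0 < δ := lt_min hε (by norm_num)
  have hsub : Metric.ball (0:ℝ) δ ⊆ U ∩ V :=
    (Metric.ball_subset_ball (min_le_left _ _)).trans hball
  set a : ℝ := deriv f 0 with ha
  have h0U : (0:ℝ) ∈ U ∩ V := hsub (Metric.mem_ball_self hδ)
  have hdf0 : HasDerivAt f a 0 := ((hUa 0 h0U.1).differentiableAt).hasDerivAt
  -- key: derivative of f at x in ball
  have key : ∀ x ∈ Metric.ball (0:ℝ) δ, HasDerivAt f (a / (1 - x)) x := by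
    intro x hx
    have hxUV := hsub hx
    have hxδ : |x| < δ := by simpa using hx
    have hxlt : |x| < 1/2 := hxδ.trans_le (min_le_right _ _)
    have hx1 : (1:ℝ) - x ≠ 0 := by
      have := abs_lt.mp hxlt; nlinarith [this.1, this.2]
    -- g y = x/(1-x) * (y/(1-y)), hasDerivAt g (x/(1-x)) 0
    have h1 : HasDerivAt (fun y : ℝ => y / (1 - y)) 1 0 := by
      have := (hasDerivAt_id (0:ℝ)).div ((hasDerivAt_id (0:ℝ)).const_sub 1) (by norm_num)
      simp at this; exact this
    have h2 : HasDerivAt (fun y : ℝ => x / (1 - x) * (y / (1 - y))) (x / (1 - x)) 0 := by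
      simpa using h1.const_mul (x / (1 - x))
    have hcomp : HasDerivAt (fun y : ℝ => f (x / (1 - x) * (y / (1 - y)))) (a * (x / (1 - x))) 0 := by
      have hdf0' : HasDerivAt f a (x / (1 - x) * (0 / (1 - 0))) := by
        norm_num; exact hdf0
      have h := HasDerivAt.comp (h₂ := f) 0 hdf0' h2
      simpa [Function.comp_def] using h
    have hL : HasDerivAt (fun y : ℝ => f (x / (1 - x) * (y / (1 - y))) + f x + f y)
        (a * (x / (1 - x)) + a) 0 := by
      exact (hcomp.add_const (f x)).add hdf0
    have heqev : (fun y : ℝ => f (x / (1 - x) * (y / (1 - y))) + f x + f y)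
        =ᶠ[nhds (0:ℝ)] (fun y : ℝ => f (x + y)) := by
      filter_upwards [hV] with y hy
      exact hVeq x hxUV.2 y hy
    have hR0 : HasDerivAt (fun y : ℝ => f (x + y)) (a * (x / (1 - x)) + a) 0 :=
      hL.congr_of_eventuallyEq heqev.symm
    have hdfx : HasDerivAt f (deriv f x) x := ((hUa x hxUV.1).differentiableAt).hasDerivAt
    have hR1 : HasDerivAt (fun y : ℝ => f (x + y)) (deriv f x) 0 := by
      have hdfx' : HasDerivAt f (deriv f x) (x + 0) := by rw [add_zero]; exact hdfx
      have h := HasDerivAt.comp (h₂ := f) 0 hdfx' ((hasDerivAt_id (0:ℝ)).const_add x)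
      simpa [Function.comp_def] using h
    have hda : deriv f x = a * (x / (1 - x)) + a := hR1.unique hR0
    have : deriv f x = a / (1 - x) := by rw [hda]; field_simp; ring
    rw [← this]; exact hdfx
  -- F := f x + a * log (1 - x) has zero derivative on the ball
  have hF : ∀ x ∈ Metric.ball (0:ℝ) δ,
      HasDerivAt (fun x => f x + a * Real.log (1 - x)) 0 x := by
    intro x hx
    have hxδ : |x| < δ := by simpa using hx
    have hxlt : |x| < 1/2 := hxδ.trans_le (min_le_right _ _)
    have hx1 : (1:ℝ) - x ≠ 0 := by
      have := abs_lt.mp hxlt; nlinarith [this.1, this.2]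
    have hlog : HasDerivAt (fun x : ℝ => Real.log (1 - x)) ((1 - x)⁻¹ * (-1)) x := by
      have h := HasDerivAt.comp (h₂ := Real.log) x (Real.hasDerivAt_log hx1)
        ((hasDerivAt_id x).const_sub 1)
      simpa [Function.comp_def] using h
    have h := (key x hx).add (hlog.const_mul a)
    have : a / (1 - x) + a * ((1 - x)⁻¹ * (-1)) = 0 := by field_simp; ring
    rwa [this] at h
  -- conclude F is constant 0 on the ball
  refine ⟨a, ?_⟩
  have hballnhds : Metric.ball (0:ℝ) δ ∈ nhds (0:ℝ) := Metric.ball_mem_nhds 0 hδ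
  filter_upwards [hballnhds] with x hx
  have := (convex_ball (0:ℝ) δ).norm_image_sub_le_of_norm_hasDerivWithin_le
    (f := fun x => f x + a * Real.log (1 - x)) (f' := fun _ => 0) (C := 0)
    (fun y hy => (hF y hy).hasDerivWithinAt) (fun y _ => by simp)
    (Metric.mem_ball_self hδ) hx
  simp [h0] at this
  linarith
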